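/- Let q be a prime power (q = p^k with p prime, k ≥ 1) and let Γ = Γ(0; m_1,…,m_r). If there exists a surjective group homomorphism from Γ onto the cyclic group ℤ/qℤ, then at least two of the periods are divisible by q, i.e., there exist indices i ≠ j with q ∣ m_i and q ∣ m_j. -/

import Mathlib

/-- The relations of the polygonal group
`Γ(0; m₁,…,m_r) = ⟨x₁,…,x_r ∣ x₁^{m₁} = ⋯ = x_r^{m_r} = x₁x₂⋯x_r = 1⟩`. -/
def polygonalRels (r : ℕ) (m : Fin r → ℕ) : Set (FreeGroup (Fin r)) :=
  {w | ∃ i, w = FreeGroup.of i ^ m i} ∪ {(List.ofFn fun i => FreeGroup.of i).prod}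

/-- The polygonal group `Γ(0; m₁,…,m_r)`. -/
abbrev PolygonalGroup (r : ℕ) (m : Fin r → ℕ) : Type :=
  PresentedGroup (polygonalRels r m)

/-- In `ZMod (p^k)`, a non-unit is divisible by `p`. -/
lemma nonunit_dvd_aux (p k q : ℕ) (hp : p.Prime) (hk : 1 ≤ k) (hq : q = p ^ k)
    (x : ZMod q) (hx : ¬ IsUnit x) : (p : ZMod q) ∣ x := by
  haveI : NeZero q := ⟨by
    subst hq; exact pow_ne_zero _ hp.pos.ne'⟩
  have hxv : ((x.val : ℕ) : ZMod q) = x := by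
    simpa using ZMod.natCast_val x
  have hnc : ¬ Nat.Coprime x.val q := by
    intro h
    exact hx (hxv ▸ (ZMod.isUnit_iff_coprime x.val q).mpr h)
  have hpd : p ∣ x.val := by
    by_contra hpd
    exact hnc (by simpa [hq] using (Nat.Coprime.pow_right k
      ((Nat.Prime.coprime_iff_not_dvd hp).mpr hpd).symm))
  obtain ⟨t, ht⟩ := hpd
  exact ⟨(t : ZMod q), by rw [← hxv, ht]; push_cast; ring⟩

/-- `p` is not a unit in `ZMod (p^k)`. -/
lemma p_not_unit_aux (p k q : ℕ) (hp : p.Prime) (hk : 1 ≤ k) (hq : q = p ^ k) :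
    ¬ IsUnit ((p : ℕ) : ZMod q) := by
  rw [ZMod.isUnit_iff_coprime]
  intro h
  have hpq : p ∣ q := hq ▸ dvd_pow_self p (by omega)
  exact hp.one_lt.ne' (Nat.Coprime.eq_one_of_dvd h hpq)

/-- If `Γ(0; m₁,…,m_r)` surjects onto the cyclic group `ℤ/qℤ` with `q = p^k`
a prime power, then at least two of the periods are divisible by `q`. -/
theorem two_periods_divisible_of_surjective_onto_zmod_primePow
    (p k q : ℕ) (hp : p.Prime) (hk : 1 ≤ k) (hq : q = p ^ k)
    (r : ℕ) (hr : 1 ≤ r) (m : Fin r → ℕ) (hm : ∀ i, 2 ≤ m i)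
    (f : PolygonalGroup r m →* Multiplicative (ZMod q))
    (hf : Function.Surjective f) :
    ∃ i j : Fin r, i ≠ j ∧ q ∣ m i ∧ q ∣ m j := by
  haveI : NeZero q := ⟨by subst hq; exact pow_ne_zero _ hp.pos.ne'⟩
  have hpu : ¬ IsUnit ((p : ℕ) : ZMod q) := p_not_unit_aux p k q hp hk hq
  set a : Fin r → ZMod q := fun i => Multiplicative.toAdd (f (PresentedGroup.of i)) with ha
  -- the power relations
  have hrel : ∀ i, (m i : ZMod q) * a i = 0 := by
    intro i
    have h1 : (PresentedGroup.of i : PolygonalGroup r m) ^ (m i) = 1 := by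
      have h0 : (QuotientGroup.mk (FreeGroup.of i ^ m i) :
          PresentedGroup (polygonalRels r m)) = 1 :=
        (QuotientGroup.eq_one_iff _).mpr
          (Subgroup.subset_normalClosure (Or.inl ⟨i, rfl⟩))
      rw [show (PresentedGroup.of i : PolygonalGroup r m)
          = QuotientGroup.mk' (Subgroup.normalClosure (polygonalRels r m))
            (FreeGroup.of i) from rfl]
      exact (map_pow (QuotientGroup.mk' (Subgroup.normalClosure (polygonalRels r m)))
        (FreeGroup.of i) (m i)).symm.trans h0
    have h2 : f (PresentedGroup.of i) ^ (m i) = 1 := by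
      rw [← map_pow, h1, map_one]
    have h3 : (m i) • a i = 0 := by
      have := congrArg Multiplicative.toAdd h2
      simpa [ha] using this
    rwa [nsmul_eq_mul] at h3
  -- the long relation
  have hsum : ∑ i, a i = 0 := by
    have h1 : ((List.ofFn fun i => PresentedGroup.of i : List (PolygonalGroup r m))).prod = 1 := by
      have h0 : (QuotientGroup.mk ((List.ofFn fun i => FreeGroup.of i).prod) :
          PresentedGroup (polygonalRels r m)) = 1 :=
        (QuotientGroup.eq_one_iff _).mpr
          (Subgroup.subset_normalClosure (Or.inr rfl))
      calc ((List.ofFn fun i => PresentedGroup.of i : List (PolygonalGroup r m))).prod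
          = (show PolygonalGroup r m from ((List.ofFn fun i => FreeGroup.of i).map
              (QuotientGroup.mk' (Subgroup.normalClosure (polygonalRels r m)))).prod) := by
            rw [List.map_ofFn]; rfl
        _ = (show PolygonalGroup r m from QuotientGroup.mk' (Subgroup.normalClosure (polygonalRels r m))
              ((List.ofFn fun i => FreeGroup.of i).prod)) := (map_list_prod _ _).symm
        _ = 1 := h0
    have h2 : (∏ i, f (PresentedGroup.of i)) = 1 := by
      rw [← List.prod_ofFn]
      have heq : (List.ofFn fun i => f (PresentedGroup.of i))
          = List.map f (List.ofFn fun i => PresentedGroup.of i) := by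
        rw [List.map_ofFn]; rfl
      rw [heq, ← map_list_prod f, h1, map_one]
    have := congrArg Multiplicative.toAdd h2
    simpa [ha, toAdd_prod] using this
  -- membership in the ideal (p) for any element of the image, assuming all a i non-units
  -- Step 1: some a i is a unit
  have hstep1 : ∃ i, IsUnit (a i) := by
    by_contra hno
    push_neg at hno
    have hmem : ∀ i, (p : ZMod q) ∣ a i := fun i =>
      nonunit_dvd_aux p k q hp hk hq _ (hno i)
    -- every element of the image is divisible by p
    have key : ∀ w : PolygonalGroup r m, (p : ZMod q) ∣ Multiplicative.toAdd (f w) := by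
      intro w
      have hw : w ∈ Subgroup.closure (Set.range (PresentedGroup.of (rels := polygonalRels r m))) := by
        rw [PresentedGroup.closure_range_of]; trivial
      induction hw using Subgroup.closure_induction with
      | mem x hx =>
        obtain ⟨i, rfl⟩ := hx
        exact hmem i
      | one => simp
      | mul x y hx hy ihx ihy =>
        have : Multiplicative.toAdd (f (x * y))
            = Multiplicative.toAdd (f x) + Multiplicative.toAdd (f y) := by simp
        rw [this]; exact dvd_add ihx ihy
      | inv x hx ihx =>
        have : Multiplicative.toAdd (f x⁻¹) = - Multiplicative.toAdd (f x) := by simp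
        rw [this]; exact dvd_neg.mpr ihx
    obtain ⟨w, hw⟩ := hf (Multiplicative.ofAdd (1 : ZMod q))
    have : (p : ZMod q) ∣ 1 := by simpa [hw] using key w
    exact hpu (isUnit_of_dvd_one this)
  obtain ⟨i, hi⟩ := hstep1
  -- Step 2: some a j with j ≠ i is a unit
  have hstep2 : ∃ j, j ≠ i ∧ IsUnit (a j) := by
    by_contra hno
    push_neg at hno
    have hmem : ∀ j ∈ Finset.univ.erase i, (p : ZMod q) ∣ a j := fun j hj =>
      nonunit_dvd_aux p k q hp hk hq _ (hno j (Finset.ne_of_mem_erase hj))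
    have hsum' : a i = - ∑ j ∈ Finset.univ.erase i, a j := by
      have := Finset.add_sum_erase Finset.univ a (Finset.mem_univ i)
      rw [hsum] at this
      linear_combination this
    have hdvd : (p : ZMod q) ∣ a i := by
      rw [hsum']
      exact dvd_neg.mpr (Finset.dvd_sum hmem)
    obtain ⟨c, hc⟩ := hdvd
    rw [hc] at hi
    exact hpu (isUnit_of_mul_isUnit_left hi)
  obtain ⟨j, hji, hj⟩ := hstep2
  -- conclude divisibility
  have div : ∀ l, IsUnit (a l) → q ∣ m l := by
    intro l hl
    have h0 : (m l : ZMod q) = 0 := by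
      obtain ⟨u, hu⟩ := hl
      have := hrel l
      rw [← hu] at this
      calc (m l : ZMod q) = ((m l : ZMod q) * u) * (u⁻¹ : (ZMod q)ˣ) := by
            rw [mul_assoc]; simp
        _ = 0 := by rw [this]; simp
    exact (ZMod.natCast_eq_zero_iff _ _).mp h0
  exact ⟨i, j, hji.symm, div i hi, div j hj⟩
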